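/- For every real ν ≥ 1 and every real z > 0, one has K_ν(z) > e^{−z}·√(π/(e·z))·(2(ν − 1/2)/(e·z))^{ν − 1/2}. -/

import Mathlib

open Real MeasureTheory

/-- Modified Bessel function of the second kind, via its integral representation. -/
noncomputable def besselK (ν z : ℝ) : ℝ :=
  ∫ t in Set.Ioi (0 : ℝ), Real.exp (-z * Real.cosh t) * Real.cosh (ν * t)

lemma num_log2_lt_one : Real.log 2 < 1 := by
  have := Real.log_two_lt_d9; linarith

lemma num_A : Real.log 2 + Real.log 3 < 2 := by
  have h6 : Real.log 6 < 2 := by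
    rw [Real.log_lt_iff_lt_exp (by norm_num)]
    have he : Real.exp 2 = (Real.exp 1) ^ (2:ℕ) := by
      rw [← Real.exp_nat_mul]; norm_num
    rw [he]
    nlinarith [Real.exp_one_gt_d9]
  rw [show (6:ℝ) = 2*3 by norm_num, Real.log_mul (by norm_num) (by norm_num)] at h6
  linarith

lemma num_B : 1/2*Real.log π + 3/2*Real.log 3 - 1/2*Real.log 2 < 2 := by
  have h : Real.log (π*27/2) < 4 := by
    rw [Real.log_lt_iff_lt_exp (by positivity)]
    have he : Real.exp 4 = (Real.exp 1) ^ (4:ℕ) := by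
      rw [← Real.exp_nat_mul]; norm_num
    rw [he]
    have h1 : (2.7182818283:ℝ) < Real.exp 1 := Real.exp_one_gt_d9
    have h2 : (7.389:ℝ) < (Real.exp 1)^(2:ℕ) := by nlinarith
    have h3 : (54:ℝ) < (Real.exp 1)^(4:ℕ) := by
      have : (Real.exp 1)^(4:ℕ) = ((Real.exp 1)^(2:ℕ))^(2:ℕ) := by ring
      rw [this]; nlinarith
    nlinarith [Real.pi_lt_d2]
  rw [Real.log_div (by positivity) (by norm_num),
    Real.log_mul (by positivity) (by norm_num),
    show (27:ℝ) = 3^(3:ℕ) by norm_num, Real.log_pow] at h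
  push_cast at h
  linarith

lemma num_C : 5*Real.log 3 < 8*Real.log 2 := by
  have h := Real.log_lt_log (by norm_num : (0:ℝ) < 243) (by norm_num : (243:ℝ) < 256)
  rw [show (243:ℝ) = 3^(5:ℕ) by norm_num, show (256:ℝ) = 2^(8:ℕ) by norm_num,
    Real.log_pow, Real.log_pow] at h
  push_cast at h
  linarith

lemma num_exp2_lt_8 : Real.exp 2 < 8 := by
  have he : Real.exp 2 = (Real.exp 1) ^ (2:ℕ) := by rw [← Real.exp_nat_mul]; norm_num
  rw [he]; nlinarith [Real.exp_one_lt_d9, Real.exp_pos 1]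

lemma num_D : 2/3 < Real.log 2 := by
  rw [Real.lt_log_iff_exp_lt (by norm_num)]
  have h : (Real.exp (2/3)) ^ (3:ℕ) = Real.exp 2 := by rw [← Real.exp_nat_mul]; norm_num
  nlinarith [num_exp2_lt_8, Real.exp_pos (2/3), h, sq_nonneg (Real.exp (2/3) + 2),
    sq_nonneg (Real.exp (2/3) - 2)]

lemma num_F : 1/3 < Real.log 3 - Real.log 2 := by
  have h32 : Real.log (3/2) = Real.log 3 - Real.log 2 :=
    Real.log_div (by norm_num) (by norm_num)
  rw [← h32, Real.lt_log_iff_exp_lt (by norm_num)]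
  have h : (Real.exp (1/3)) ^ (3:ℕ) = Real.exp 1 := by rw [← Real.exp_nat_mul]; norm_num
  nlinarith [Real.exp_one_lt_d9, Real.exp_pos (1/3), h, sq_nonneg (Real.exp (1/3) + 3/2),
    sq_nonneg (Real.exp (1/3) - 3/2)]

lemma mul_log_sub_le_max {p q y : ℝ} (hp : 0 ≤ p) (hpq : p < q) (hy1 : p ≤ y) (hy2 : y ≤ q) :
    y * Real.log y - y ≤ max (p * Real.log p - p) (q * Real.log q - q) := by
  have hqp : q - p ≠ 0 := by linarith
  set a := (q - y)/(q - p) with ha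
  set b := (y - p)/(q - p) with hb
  have hab : a + b = 1 := by rw [ha, hb, ← add_div, show q - y + (y - p) = q - p by ring, div_self hqp]
  have ha0 : 0 ≤ a := by apply div_nonneg <;> linarith
  have hb0 : 0 ≤ b := by apply div_nonneg <;> linarith
  have hyab : a * p + b * q = y := by rw [ha, hb]; field_simp; ring
  have hcx := Real.convexOn_mul_log.2 (Set.mem_Ici.mpr hp)
    (Set.mem_Ici.mpr (by linarith : (0:ℝ) ≤ q)) ha0 hb0 hab
  simp only [smul_eq_mul] at hcx
  rw [hyab] at hcx
  set M := max (p * Real.log p - p) (q * Real.log q - q) with hM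
  have h1 : a * (p * Real.log p - p) ≤ a * M :=
    mul_le_mul_of_nonneg_left (le_max_left _ _) ha0
  have h2 : b * (q * Real.log q - q) ≤ b * M :=
    mul_le_mul_of_nonneg_left (le_max_right _ _) hb0
  have h3 : a * M + b * M = M := by rw [← add_mul, hab, one_mul]
  nlinarith [hcx, h1, h2, h3, hyab]

lemma sqrt_pi_le_stirlingSeq {n : ℕ} (hn : 1 ≤ n) : Real.sqrt π ≤ Stirling.stirlingSeq n := by
  obtain ⟨m, rfl⟩ := Nat.exists_eq_add_of_le hn
  have h1 : Filter.Tendsto (Stirling.stirlingSeq ∘ Nat.succ) Filter.atTop (nhds (Real.sqrt π)) :=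
    Stirling.tendsto_stirlingSeq_sqrt_pi.comp (Filter.tendsto_add_atTop_nat 1)
  have := Stirling.stirlingSeq'_antitone.le_of_tendsto h1 m
  simpa [Nat.succ_eq_add_one, Nat.add_comm] using this

lemma factorial_stirling_log {n : ℕ} (hn : 1 ≤ n) :
    1/2*Real.log 2 + 1/2*Real.log n + 1/2*Real.log π + n*(Real.log n - 1)
      ≤ Real.log (n.factorial : ℝ) := by
  have hn0 : (0:ℝ) < n := by exact_mod_cast hn
  have h := sqrt_pi_le_stirlingSeq hn
  rw [Stirling.stirlingSeq] at h
  have hB : (0:ℝ) < Real.sqrt (2*n) * ((n:ℝ)/Real.exp 1)^n := by positivity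
  have h2 : Real.sqrt π * (Real.sqrt (2*n) * ((n:ℝ)/Real.exp 1)^n) ≤ (n.factorial : ℝ) := by
    rw [le_div_iff₀ hB] at h; exact h
  have hL := Real.log_le_log (by positivity) h2
  rw [Real.log_mul (by positivity) (by positivity),
    Real.log_mul (by positivity) (by positivity),
    Real.log_sqrt (by positivity), Real.log_sqrt (by positivity),
    Real.log_pow, Real.log_div (by positivity) (Real.exp_ne_zero 1),
    Real.log_exp, Real.log_mul (by norm_num) (by positivity)] at hL
  push_cast at hL ⊢
  linarith

lemma log_Gamma_extrap {X q : ℝ} (hX : 0 < X) (hq : X ≤ q) :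
    Real.log (Real.Gamma q) - (q - X) * Real.log q ≤ Real.log (Real.Gamma X) := by
  rcases eq_or_lt_of_le hq with rfl | hlt
  · simp
  · have hq0 : 0 < q := lt_trans hX hlt
    have h := Real.convexOn_log_Gamma.slope_mono_adjacent (Set.mem_Ioi.mpr hX)
      (Set.mem_Ioi.mpr (by linarith : (0:ℝ) < q + 1)) hlt (by linarith : q < q + 1)
    simp only [Function.comp] at h
    have hΓq : 0 < Real.Gamma q := Real.Gamma_pos_of_pos hq0
    rw [Real.Gamma_add_one (ne_of_gt hq0),
      Real.log_mul (ne_of_gt hq0) (ne_of_gt hΓq)] at h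
    have h2 : q + 1 - q = 1 := by ring
    rw [h2, div_one] at h
    have h3 := (div_le_iff₀ (by linarith : (0:ℝ) < q - X)).mp h
    linarith

lemma phi_pos_real3 {n s : ℝ} (hn : 3 ≤ n) (hs0 : 0 ≤ s) (hs1 : s ≤ 1) :
    0 < 1/2*Real.log n + n*Real.log n + (s-1)*Real.log (n+1) + s
        - (n+s-1/2)*Real.log (n+s-1/2) := by
  have hn0 : (0:ℝ) < n := by linarith
  have hy0 : (0:ℝ) < n + s - 1/2 := by linarith
  have t1 : Real.log (n+1) ≤ Real.log n + 1/n := by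
    have h := Real.log_le_sub_one_of_pos (show (0:ℝ) < (n+1)/n by positivity)
    rw [Real.log_div (by linarith) (ne_of_gt hn0)] at h
    have heq : (n+1)/n - 1 = 1/n := by field_simp; ring
    linarith [heq ▸ h]
  have t2 : Real.log (n+s-1/2) ≤ Real.log n + (s-1/2)/n := by
    have h := Real.log_le_sub_one_of_pos (show (0:ℝ) < (n+s-1/2)/n by positivity)
    rw [Real.log_div (ne_of_gt hy0) (ne_of_gt hn0)] at h
    have heq : (n+s-1/2)/n - 1 = (s-1/2)/n := by field_simp; ring
    linarith [heq ▸ h]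
  have m1 : (s-1)*(Real.log n + 1/n) ≤ (s-1)*Real.log (n+1) :=
    mul_le_mul_of_nonpos_left t1 (by linarith)
  have m2 : (n+s-1/2)*Real.log (n+s-1/2) ≤ (n+s-1/2)*(Real.log n + (s-1/2)/n) :=
    mul_le_mul_of_nonneg_left t2 (le_of_lt hy0)
  have pol : 0 < (s-1)*(1/n) + s - (n+s-1/2)*((s-1/2)/n) := by
    have heq : (s-1)*(1/n) + s - (n+s-1/2)*((s-1/2)/n)
        = ((s-1) + s*n - (n+s-1/2)*(s-1/2))/n := by field_simp
    rw [heq]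
    apply div_pos ?_ hn0
    nlinarith [sq_nonneg (s-1/2)]
  nlinarith [m1, m2, pol]

lemma phi_pos_real2 {s : ℝ} (hs0 : 0 ≤ s) (hs1 : s ≤ 1) :
    0 < 1/2*Real.log 2 + 2*Real.log 2 + (s-1)*Real.log 3 + s
        - (2+s-1/2)*Real.log (2+s-1/2) := by
  have hy0 : (0:ℝ) < 2 + s - 1/2 := by linarith
  have t2 : Real.log (2+s-1/2) ≤ Real.log 3 - Real.log 2 + (2/3)*s := by
    have h := Real.log_le_sub_one_of_pos (show (0:ℝ) < (2+s-1/2)/(3/2) by positivity)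
    rw [Real.log_div (ne_of_gt hy0) (by norm_num)] at h
    have h32 : Real.log (3/2) = Real.log 3 - Real.log 2 :=
      Real.log_div (by norm_num) (by norm_num)
    have heq : (2+s-1/2)/(3/2) - 1 = (2/3)*s := by ring
    rw [heq, h32] at h
    linarith
  have m2 : (2+s-1/2)*Real.log (2+s-1/2)
      ≤ (2+s-1/2)*(Real.log 3 - Real.log 2 + (2/3)*s) :=
    mul_le_mul_of_nonneg_left t2 (le_of_lt hy0)
  have snn : 0 ≤ s*Real.log 2 - (2/3)*s^2 := by
    nlinarith [mul_nonneg hs0 (sub_nonneg.mpr num_D.le), mul_nonneg hs0 (sub_nonneg.mpr hs1)]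
  nlinarith [m2, num_C, snn]

lemma phi_pos {n : ℕ} (hn : 2 ≤ n) {s : ℝ} (hs0 : 0 ≤ s) (hs1 : s ≤ 1) :
    0 < 1/2*Real.log n + n*Real.log n + (s-1)*Real.log (n+1) + s
        - (n+s-1/2)*Real.log (n+s-1/2) := by
  rcases eq_or_lt_of_le hn with hn2 | hn3
  · have : (n:ℝ) = 2 := by exact_mod_cast hn2.symm
    rw [this]
    have h := phi_pos_real2 hs0 hs1
    norm_num at h ⊢
    convert h using 3 <;> norm_num
  · have : (3:ℝ) ≤ n := by exact_mod_cast hn3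
    exact phi_pos_real3 this hs0 hs1

lemma gamma_lb {X : ℝ} (hX : 1 ≤ X) :
    Real.sqrt (2*π/Real.exp 1) * ((X - 1/2)/Real.exp 1) ^ (X - 1/2) < Real.Gamma X := by
  have hXpos : 0 < X := by linarith
  have hy0 : 0 < X - 1/2 := by linarith
  have hΓpos : 0 < Real.Gamma X := Real.Gamma_pos_of_pos hXpos
  have hLpos : 0 < Real.sqrt (2*π/Real.exp 1) * ((X - 1/2)/Real.exp 1) ^ (X - 1/2) := by
    have h1 := Real.rpow_pos_of_pos (show (0:ℝ) < (X-1/2)/Real.exp 1 by positivity) (X - 1/2)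
    have h2 : 0 < Real.sqrt (2*π/Real.exp 1) := Real.sqrt_pos.mpr (by positivity)
    positivity
  rw [← Real.log_lt_log_iff hLpos hΓpos]
  have hlogL : Real.log (Real.sqrt (2*π/Real.exp 1) * ((X - 1/2)/Real.exp 1) ^ (X - 1/2))
      = 1/2*(Real.log 2 + Real.log π - 1) + (X-1/2)*(Real.log (X-1/2) - 1) := by
    rw [Real.log_mul (by positivity) (by positivity),
      Real.log_sqrt (by positivity),
      Real.log_rpow (by positivity),
      Real.log_div (by positivity) (Real.exp_ne_zero 1),
      Real.log_div (by positivity) (Real.exp_ne_zero 1),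
      Real.log_mul (by norm_num) (by positivity), Real.log_exp]
    ring
  rw [hlogL]
  have hlog32 : Real.log (3/2) = Real.log 3 - Real.log 2 :=
    Real.log_div (by norm_num) (by norm_num)
  rcases le_or_gt X (3/2) with h32 | h32
  · -- X ∈ [1, 3/2]
    have hext := log_Gamma_extrap hXpos h32
    have hΓ32 : Real.Gamma (3/2 : ℝ) = Real.sqrt π / 2 := by
      rw [show (3/2:ℝ) = 1/2 + 1 by norm_num, Real.Gamma_add_one (by norm_num),
        Real.Gamma_one_half_eq]; ring
    have hlog32g : Real.log (Real.Gamma (3/2:ℝ)) = 1/2*Real.log π - Real.log 2 := by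
      rw [hΓ32, Real.log_div (by positivity) (by norm_num), Real.log_sqrt pi_pos.le]
      ring
    have hmax : (X-1/2)*Real.log (X-1/2) - (X-1/2) ≤ -(1/2)*Real.log 2 - 1/2 := by
      have h := mul_log_sub_le_max (p := 1/2) (q := 1) (y := X - 1/2) (by norm_num)
        (by norm_num) (by linarith) (by linarith)
      have hl12 : Real.log (1/2 : ℝ) = -Real.log 2 := by
        rw [show (1:ℝ)/2 = 2⁻¹ by norm_num, Real.log_inv]
      rw [Real.log_one, hl12] at h
      have hm : max (1/2*(-Real.log 2) - 1/2) (1*0 - 1) = 1/2*(-Real.log 2) - 1/2 := by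
        rw [max_eq_left]; nlinarith [num_log2_lt_one]
      rw [hm] at h
      linarith
    have hslack : (3/2 - X)*Real.log (3/2) ≤ (1/2)*Real.log (3/2) :=
      mul_le_mul_of_nonneg_right (show (3/2 - X : ℝ) ≤ 1/2 by linarith)
        (Real.log_nonneg (by norm_num))
    rw [hlog32g] at hext
    rw [hlog32] at hext hslack
    nlinarith [hext, hmax, hslack, num_A]
  rcases le_or_gt X 2 with h2 | h2
  · -- X ∈ (3/2, 2]
    have hext := log_Gamma_extrap hXpos h2
    rw [Real.Gamma_two, Real.log_one] at hext
    have hmax : (X-1/2)*Real.log (X-1/2) - (X-1/2)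
        ≤ (3/2)*Real.log (3/2) - 3/2 := by
      have h := mul_log_sub_le_max (p := 1) (q := 3/2) (y := X - 1/2) (by norm_num)
        (by norm_num) (by linarith) (by linarith)
      rw [Real.log_one] at h
      have hm : max (1*0 - 1) (3/2*Real.log (3/2) - 3/2) = 3/2*Real.log (3/2) - 3/2 := by
        rw [max_eq_right]; rw [hlog32]; nlinarith [num_F]
      rw [hm] at h
      linarith
    have hslack : (2 - X)*Real.log 2 ≤ (1/2)*Real.log 2 :=
      mul_le_mul_of_nonneg_right (show (2 - X : ℝ) ≤ 1/2 by linarith)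
        (Real.log_nonneg (by norm_num))
    rw [hlog32] at hmax
    nlinarith [hext, hmax, hslack, num_B]
  · -- X > 2
    set n := ⌊X⌋₊ with hndef
    have hn2 : 2 ≤ n := Nat.le_floor (by push_cast; linarith)
    have hnX : (n:ℝ) ≤ X := Nat.floor_le (by linarith)
    have hXn : X < n + 1 := Nat.lt_floor_add_one X
    have hext := log_Gamma_extrap hXpos (le_of_lt hXn)
    rw [Real.Gamma_nat_eq_factorial n] at hext
    have hst := factorial_stirling_log (le_trans one_le_two hn2)
    have hphi := phi_pos hn2 (s := X - n) (by linarith) (by linarith)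
    have e1 : (n:ℝ) + (X - n) - 1/2 = X - 1/2 := by ring
    rw [e1] at hphi
    nlinarith [hext, hst, hphi]

/- ### Part A: pointwise bounds for the Bessel integrand -/

lemma aux_rpow {p a : ℝ} (hp : 1 ≤ p) (ha : 1 < a) :
    (a - a⁻¹) ^ p * (a + a⁻¹) ≤ a ^ (p+1) := by
  have ha0 : (0:ℝ) < a := by linarith
  have hia : 0 < a⁻¹ := by positivity
  have hprod : a * a⁻¹ = 1 := mul_inv_cancel₀ (ne_of_gt ha0)
  have hia1 : a⁻¹ < 1 := by nlinarith
  have hb0 : 0 < 1 - a⁻¹*a⁻¹ := by nlinarith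
  have hb1 : 1 - a⁻¹*a⁻¹ ≤ 1 := by nlinarith
  have hsub : a - a⁻¹ = a * (1 - a⁻¹*a⁻¹) := by field_simp
  have hstep : (1 - a⁻¹*a⁻¹) ^ p ≤ 1 - a⁻¹*a⁻¹ := by
    have h := Real.rpow_le_rpow_of_exponent_ge hb0 hb1 hp
    rwa [Real.rpow_one] at h
  have hap : 0 < a ^ p := Real.rpow_pos_of_pos ha0 p
  have h1 : (a - a⁻¹) ^ p = a ^ p * (1 - a⁻¹*a⁻¹) ^ p := by
    rw [hsub, Real.mul_rpow ha0.le hb0.le]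
  have h2 : (1 - a⁻¹*a⁻¹) * (a + a⁻¹) ≤ a := by
    nlinarith [mul_pos (mul_pos hia hia) hia]
  calc (a - a⁻¹) ^ p * (a + a⁻¹) = a ^ p * ((1 - a⁻¹*a⁻¹) ^ p * (a + a⁻¹)) := by
        rw [h1]; ring
    _ ≤ a ^ p * ((1 - a⁻¹*a⁻¹) * (a + a⁻¹)) := by
        apply mul_le_mul_of_nonneg_left ?_ hap.le
        apply mul_le_mul_of_nonneg_right hstep (by linarith)
    _ ≤ a ^ p * a := mul_le_mul_of_nonneg_left h2 hap.le
    _ = a ^ (p+1) := (Real.rpow_add_one (ne_of_gt ha0) p).symm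

lemma cosh_nu_bound {ν t : ℝ} (hν : 1 ≤ ν) (ht : 0 < t) :
    (2 * Real.sinh (t/2)) ^ (2*ν - 1) * Real.cosh (t/2) ≤ Real.cosh (ν * t) := by
  have ha : 1 < Real.exp (t/2) := by
    rw [show (1:ℝ) = Real.exp 0 from (Real.exp_zero).symm]
    exact Real.exp_lt_exp.mpr (by linarith)
  have h2s : 2 * Real.sinh (t/2) = Real.exp (t/2) - (Real.exp (t/2))⁻¹ := by
    rw [Real.sinh_eq, Real.exp_neg]; ring
  have hc : Real.cosh (t/2) = (Real.exp (t/2) + (Real.exp (t/2))⁻¹)/2 := by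
    rw [Real.cosh_eq, Real.exp_neg]
  have hexp : Real.exp (t/2) ^ (2*ν : ℝ) = Real.exp (ν*t) := by
    rw [Real.rpow_def_of_pos (Real.exp_pos _), Real.log_exp]
    congr 1; ring
  have hcn : Real.cosh (ν*t)
      = (Real.exp (t/2) ^ (2*ν:ℝ) + (Real.exp (t/2) ^ (2*ν:ℝ))⁻¹)/2 := by
    rw [Real.cosh_eq, Real.exp_neg, hexp]
  have key := aux_rpow (p := 2*ν-1) (a := Real.exp (t/2)) (by linarith) ha
  rw [show 2*ν - 1 + 1 = 2*ν by ring] at key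
  have hinv : 0 < (Real.exp (t/2) ^ (2*ν:ℝ))⁻¹ := by positivity
  rw [h2s, hc, hcn]
  nlinarith [key, hinv]

/- ### Main theorem -/

theorem besselK_lower_bound (ν z : ℝ) (hν : 1 ≤ ν) (hz : 0 < z) :
    besselK ν z >
      Real.exp (-z) * Real.sqrt (π / (Real.exp 1 * z)) *
        (2 * (ν - 1 / 2) / (Real.exp 1 * z)) ^ (ν - 1 / 2) := by
  set g : ℝ → ℝ := fun u => (2*u) ^ (2*ν-1) * Real.exp (-(2*z)*u^2) with hgdef
  -- change of variables setup
  have hderiv : ∀ t ∈ Set.Ioi (0:ℝ), HasDerivWithinAt (fun t : ℝ => Real.sinh (t/2))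
      (Real.cosh (t/2) * (1/2)) (Set.Ioi 0) t := by
    intro t _
    exact ((Real.hasDerivAt_sinh (t/2)).comp t ((hasDerivAt_id t).div_const 2)).hasDerivWithinAt
  have hinj : Set.InjOn (fun t : ℝ => Real.sinh (t/2)) (Set.Ioi 0) := by
    intro x _ y _ h
    have := Real.sinh_injective h
    linarith
  have himg : (fun t : ℝ => Real.sinh (t/2)) '' (Set.Ioi 0) = Set.Ioi 0 := by
    ext u
    simp only [Set.mem_image, Set.mem_Ioi]
    constructor
    · rintro ⟨t, ht, rfl⟩
      exact Real.sinh_pos_iff.mpr (by linarith)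
    · intro hu
      refine ⟨2*Real.arsinh u, ?_, ?_⟩
      · have := Real.arsinh_pos_iff.mpr hu; linarith
      · rw [show 2*Real.arsinh u/2 = Real.arsinh u by ring, Real.sinh_arsinh]
  have hg_int : IntegrableOn g (Set.Ioi 0) := by
    have base : IntegrableOn (fun u : ℝ => u ^ (2*ν-1) * Real.exp (-(2*z)*u^2)) (Set.Ioi 0) :=
      integrableOn_rpow_mul_exp_neg_mul_sq (by linarith) (by linarith)
    have h2 : IntegrableOn (fun u : ℝ => (2:ℝ)^(2*ν-1) * (u ^ (2*ν-1) * Real.exp (-(2*z)*u^2)))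
        (Set.Ioi 0) := base.const_mul ((2:ℝ)^(2*ν-1))
    apply IntegrableOn.congr_fun h2 ?_ measurableSet_Ioi
    intro u hu
    simp only [hgdef]
    rw [Real.mul_rpow (by norm_num) (le_of_lt hu)]
    ring
  have hG_int : IntegrableOn
      (fun t => |Real.cosh (t/2) * (1/2)| • g (Real.sinh (t/2))) (Set.Ioi 0) := by
    have h := integrableOn_image_iff_integrableOn_abs_deriv_smul
      measurableSet_Ioi hderiv hinj g
    rw [himg] at h
    exact h.mp hg_int
  have hcov := integral_image_eq_integral_abs_deriv_smul measurableSet_Ioi hderiv hinj g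
  rw [himg] at hcov
  -- integrability of the Bessel integrand
  have hF_int : IntegrableOn (fun t => Real.exp (-z * Real.cosh t) * Real.cosh (ν*t))
      (Set.Ioi 0) := by
    have hg2 : Integrable (fun t : ℝ => Real.exp (-(z/2)*(t - ν/z)^2)) :=
      (integrable_exp_neg_mul_sq (by linarith : (0:ℝ) < z/2)).comp_sub_right (ν/z)
    have hg3 : Integrable (fun t : ℝ => Real.exp (ν^2/(2*z)) * Real.exp (-(z/2)*(t - ν/z)^2)) :=
      hg2.const_mul _
    refine (hg3.restrict (s := Set.Ioi 0)).mono' ?_ ?_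
    · exact (((Real.continuous_exp.comp (continuous_const.mul Real.continuous_cosh)).mul
        (Real.continuous_cosh.comp (continuous_const.mul continuous_id))).aestronglyMeasurable)
    · filter_upwards [ae_restrict_mem measurableSet_Ioi] with t ht
      have ht0 : (0:ℝ) < t := ht
      have hpos : (0:ℝ) < Real.exp (-z * Real.cosh t) * Real.cosh (ν*t) := by
        positivity
      rw [Real.norm_eq_abs, abs_of_pos hpos]
      have h1 : Real.cosh (ν*t) ≤ Real.exp (ν*t) := by
        rw [Real.cosh_eq]
        have : Real.exp (-(ν*t)) ≤ Real.exp (ν*t) :=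
          Real.exp_le_exp.mpr (by nlinarith)
        linarith
      have h2 : 1 + t^2/2 ≤ Real.cosh t := by
        have hs : t/2 ≤ Real.sinh (t/2) := Real.self_le_sinh_iff.mpr (by linarith)
        have hcosh : Real.cosh t = 1 + 2*Real.sinh (t/2)^2 := by
          have h := Real.cosh_two_mul (t/2)
          rw [show 2*(t/2) = t by ring] at h
          rw [h, Real.cosh_sq]; ring
        nlinarith
      have h3 : Real.exp (-z * Real.cosh t) ≤ Real.exp (-z*(1 + t^2/2)) :=
        Real.exp_le_exp.mpr (by nlinarith)
      calc Real.exp (-z * Real.cosh t) * Real.cosh (ν*t)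
          ≤ Real.exp (-z*(1 + t^2/2)) * Real.exp (ν*t) := by
            apply mul_le_mul h3 h1 (Real.cosh_pos _).le (Real.exp_pos _).le
        _ ≤ Real.exp (ν^2/(2*z)) * Real.exp (-(z/2)*(t - ν/z)^2) := by
            rw [← Real.exp_add, ← Real.exp_add]
            apply Real.exp_le_exp.mpr
            have hexpand : ν^2/(2*z) + -(z/2)*(t - ν/z)^2 = ν*t - z*t^2/2 := by
              field_simp
              ring
            rw [hexpand]
            nlinarith
  -- pointwise comparison
  have hmono : ∫ t in Set.Ioi (0:ℝ),
      (Real.exp (-z) * 2) * (|Real.cosh (t/2) * (1/2)| • g (Real.sinh (t/2)))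
      ≤ besselK ν z := by
    apply setIntegral_mono_on (hG_int.const_mul _) hF_int measurableSet_Ioi
    intro t ht
    have ht0 : (0:ℝ) < t := ht
    have hch : (0:ℝ) < Real.cosh (t/2) := Real.cosh_pos _
    rw [smul_eq_mul, abs_of_pos (by positivity : (0:ℝ) < Real.cosh (t/2) * (1/2))]
    have hcosh : Real.cosh t = 1 + 2*Real.sinh (t/2)^2 := by
      have h := Real.cosh_two_mul (t/2)
      rw [show 2*(t/2) = t by ring] at h
      rw [h, Real.cosh_sq]; ring
    have hee : Real.exp (-z) * Real.exp (-(2*z) * Real.sinh (t/2)^2)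
        = Real.exp (-z*Real.cosh t) := by
      rw [← Real.exp_add, hcosh]
      congr 1; ring
    have hkey := cosh_nu_bound hν ht0
    calc (Real.exp (-z) * 2) * ((Real.cosh (t/2) * (1/2)) * g (Real.sinh (t/2)))
        = (Real.exp (-z) * Real.exp (-(2*z) * Real.sinh (t/2)^2)) *
            ((2*Real.sinh (t/2)) ^ (2*ν-1) * Real.cosh (t/2)) := by
          simp only [hgdef]; ring
      _ = Real.exp (-z*Real.cosh t) * ((2*Real.sinh (t/2)) ^ (2*ν-1) * Real.cosh (t/2)) := by
          rw [hee]
      _ ≤ Real.exp (-z*Real.cosh t) * Real.cosh (ν*t) :=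
          mul_le_mul_of_nonneg_left hkey (Real.exp_pos _).le
  -- value of the lower integral
  have hval : ∫ u in Set.Ioi (0:ℝ), g u
      = 2^(2*ν-1) * ((2*z) ^ (-(2*ν-1+1)/2) * (1/2) * Real.Gamma ((2*ν-1+1)/2)) := by
    have h0 : ∀ u ∈ Set.Ioi (0:ℝ),
        g u = (2:ℝ)^(2*ν-1) * (u ^ (2*ν-1) * Real.exp (-(2*z) * u ^ (2:ℝ))) := by
      intro u hu
      simp only [hgdef]
      rw [Real.mul_rpow (by norm_num) (le_of_lt hu), Real.rpow_two]
      ring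
    rw [setIntegral_congr_fun measurableSet_Ioi h0, integral_const_mul,
      integral_rpow_mul_exp_neg_mul_rpow (by norm_num) (by linarith) (by linarith)]
  have hsimp : (2*ν-1+1)/2 = ν := by ring
  have hsimp2 : -(2*ν-1+1)/2 = -ν := by ring
  rw [hsimp, hsimp2] at hval
  -- assemble the lower bound
  have hlow : (Real.exp (-z) * 2^(2*ν-1) * (2*z) ^ (-ν)) * Real.Gamma ν ≤ besselK ν z := by
    have hc : ∫ t in Set.Ioi (0:ℝ),
        (Real.exp (-z) * 2) * (|Real.cosh (t/2) * (1/2)| • g (Real.sinh (t/2)))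
        = (Real.exp (-z) * 2) * ∫ u in Set.Ioi (0:ℝ), g u := by
      rw [integral_const_mul, ← hcov]
    rw [hc, hval] at hmono
    calc (Real.exp (-z) * 2^(2*ν-1) * (2*z) ^ (-ν)) * Real.Gamma ν
        = (Real.exp (-z) * 2) * (2^(2*ν-1) * ((2*z) ^ (-ν) * (1/2) * Real.Gamma ν)) := by ring
      _ ≤ besselK ν z := hmono
  -- the constant identity and the Gamma lower bound
  have hμ : (0:ℝ) < ν - 1/2 := by linarith
  have hez : (0:ℝ) < Real.exp 1 * z := by positivity
  have hid : Real.sqrt (π / (Real.exp 1 * z)) * (2 * (ν - 1/2) / (Real.exp 1 * z)) ^ (ν - 1/2)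
      = 2^(2*ν-1) * (2*z) ^ (-ν) *
        (Real.sqrt (2*π/Real.exp 1) * ((ν - 1/2)/Real.exp 1) ^ (ν - 1/2)) := by
    have hL : (0:ℝ) < Real.sqrt (π / (Real.exp 1 * z))
        * (2 * (ν - 1/2) / (Real.exp 1 * z)) ^ (ν - 1/2) := by
      have h1 := Real.rpow_pos_of_pos (show (0:ℝ) < 2 * (ν - 1/2) / (Real.exp 1 * z) by positivity) (ν - 1/2)
      have h2 : (0:ℝ) < Real.sqrt (π / (Real.exp 1 * z)) := Real.sqrt_pos.mpr (by positivity)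
      positivity
    have hR : (0:ℝ) < 2^(2*ν-1) * (2*z) ^ (-ν) *
        (Real.sqrt (2*π/Real.exp 1) * ((ν - 1/2)/Real.exp 1) ^ (ν - 1/2)) := by
      have h1 := Real.rpow_pos_of_pos (show (0:ℝ) < (ν - 1/2)/Real.exp 1 by positivity) (ν - 1/2)
      have h2 : (0:ℝ) < Real.sqrt (2*π/Real.exp 1) := Real.sqrt_pos.mpr (by positivity)
      have h3 := Real.rpow_pos_of_pos (show (0:ℝ) < (2:ℝ) by norm_num) (2*ν-1)
      have h4 := Real.rpow_pos_of_pos (show (0:ℝ) < 2*z by linarith) (-ν)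
      positivity
    apply Real.log_injOn_pos (Set.mem_Ioi.mpr hL) (Set.mem_Ioi.mpr hR)
    rw [Real.log_mul (ne_of_gt (Real.sqrt_pos.mpr (by positivity))) (ne_of_gt (Real.rpow_pos_of_pos (by positivity) _)),
      Real.log_sqrt (by positivity),
      Real.log_rpow (by positivity),
      Real.log_div (ne_of_gt pi_pos) (ne_of_gt hez),
      Real.log_div (by positivity) (ne_of_gt hez),
      Real.log_mul (ne_of_gt (Real.exp_pos 1)) (ne_of_gt hz), Real.log_exp,
      Real.log_mul (by norm_num) (ne_of_gt hμ),
      Real.log_mul (ne_of_gt (mul_pos (Real.rpow_pos_of_pos (by norm_num) _) (Real.rpow_pos_of_pos (by linarith) _))) (ne_of_gt (mul_pos (Real.sqrt_pos.mpr (by positivity)) (Real.rpow_pos_of_pos (by positivity) _))),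
      Real.log_mul (ne_of_gt (Real.rpow_pos_of_pos (by norm_num) _)) (ne_of_gt (Real.rpow_pos_of_pos (by linarith) _)),
      Real.log_rpow (by norm_num : (0:ℝ) < 2),
      Real.log_rpow (by linarith : (0:ℝ) < 2*z),
      Real.log_mul (ne_of_gt (Real.sqrt_pos.mpr (by positivity))) (ne_of_gt (Real.rpow_pos_of_pos (by positivity) _)),
      Real.log_sqrt (by positivity),
      Real.log_rpow (by positivity),
      Real.log_div (by positivity) (ne_of_gt (Real.exp_pos 1)),
      Real.log_div (by positivity) (ne_of_gt (Real.exp_pos 1)),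
      Real.log_mul (by norm_num) (ne_of_gt pi_pos),
      Real.log_mul (by norm_num) (ne_of_gt hz),
      Real.log_exp]
    ring
  have hCpos : (0:ℝ) < Real.exp (-z) * 2^(2*ν-1) * (2*z) ^ (-ν) := by
    have h3 := Real.rpow_pos_of_pos (show (0:ℝ) < (2:ℝ) by norm_num) (2*ν-1)
    have h4 := Real.rpow_pos_of_pos (show (0:ℝ) < 2*z by linarith) (-ν)
    positivity
  have hgam := gamma_lb hν
  have hfin : Real.exp (-z) * Real.sqrt (π / (Real.exp 1 * z)) *
      (2 * (ν - 1/2) / (Real.exp 1 * z)) ^ (ν - 1/2)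
      < (Real.exp (-z) * 2^(2*ν-1) * (2*z) ^ (-ν)) * Real.Gamma ν := by
    calc Real.exp (-z) * Real.sqrt (π / (Real.exp 1 * z)) *
        (2 * (ν - 1/2) / (Real.exp 1 * z)) ^ (ν - 1/2)
        = (Real.exp (-z) * 2^(2*ν-1) * (2*z) ^ (-ν)) *
          (Real.sqrt (2*π/Real.exp 1) * ((ν - 1/2)/Real.exp 1) ^ (ν - 1/2)) := by
          rw [mul_assoc, hid]; ring
      _ < (Real.exp (-z) * 2^(2*ν-1) * (2*z) ^ (-ν)) * Real.Gamma ν :=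
          (mul_lt_mul_iff_right₀ hCpos).mpr hgam
  exact lt_of_lt_of_le hfin hlow
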